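/- arXiv:2008.09429 — 5 statements merged into one kernel-verified Lean document; each statement's English description precedes it below -/
import Mathlib

section
/- For every n ∈ ℕ and every t ∈ (0,T], the left limit gⁿ(t−) = lim_{s↑t} gⁿ(s) exists in ℝ ∪ {−∞}, satisfies gⁿ(t−) ≤ gⁿ(t), and is given by the formula gⁿ(t−) = −n·t + inf{α ∈ ℝ : ∫_{(0,t)} (g(s) + n·s − α)⁺ dμ(s) = 0} (the infimum over α ∈ ℝ, equal to −∞ when the set of such α is all of ℝ). -/
open MeasureTheory Filter Topology Set

/-- `gnProc μ g n t` is the process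
`gⁿ(t) = -n·t + inf{α ∈ ℝ : ∫_{(0,t]} (g(s) + n·s - α)⁺ dμ(s) = 0}`,
with values in `EReal` (it equals `⊥` exactly when `μ((0,t]) = 0`). -/
noncomputable def gnProc (μ : Measure ℝ) (g : ℝ → ℝ) (n : ℕ) (t : ℝ) : EReal :=
  ((-((n : ℝ) * t) : ℝ) : EReal) +
    sInf ((fun a : ℝ => (a : EReal)) ''
      {a : ℝ | ∫⁻ s in Set.Ioc (0 : ℝ) t, ENNReal.ofReal (g s + (n : ℝ) * s - a) ∂μ = 0})

/-- For every `n ∈ ℕ` and `t ∈ (0,T]`, the left limit `gⁿ(t−) = lim_{s↑t} gⁿ(s)` exists in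
`ℝ ∪ {−∞}`, satisfies `gⁿ(t−) ≤ gⁿ(t)`, and is given by
`gⁿ(t−) = −n·t + inf{α ∈ ℝ : ∫_{(0,t)} (g(s) + n·s − α)⁺ dμ(s) = 0}`. -/
theorem stmt_3 (T : ℝ) (hT : 0 < T) (μ : Measure ℝ) [IsFiniteMeasure μ]
    (hsupp : μ (Set.Ioc (0 : ℝ) T)ᶜ = 0)
    (g : ℝ → ℝ) (hg : Measurable g)
    (α₀ : ℝ) (hbdd : ∀ᵐ s ∂μ, s ∈ Set.Ioc (0 : ℝ) T → g s ≤ α₀)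
    (n : ℕ) (t : ℝ) (ht : t ∈ Set.Ioc (0 : ℝ) T) :
    ∃ Lt : EReal,
      Tendsto (gnProc μ g n) (𝓝[<] t) (𝓝 Lt) ∧
      Lt ≤ gnProc μ g n t ∧
      Lt = ((-((n : ℝ) * t) : ℝ) : EReal) +
        sInf ((fun a : ℝ => (a : EReal)) ''
          {a : ℝ | ∫⁻ s in Set.Ioo (0 : ℝ) t, ENNReal.ofReal (g s + (n : ℝ) * s - a) ∂μ = 0}) := by
  classical
  set A : ℝ → Set ℝ := fun s =>
    {a : ℝ | ∫⁻ x in Set.Ioc (0 : ℝ) s, ENNReal.ofReal (g x + (n : ℝ) * x - a) ∂μ = 0} with hA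
  set S : ℝ → EReal := fun s => sInf ((fun a : ℝ => (a : EReal)) '' A s) with hSdef
  set B : Set ℝ :=
    {a : ℝ | ∫⁻ x in Set.Ioo (0 : ℝ) t, ENNReal.ofReal (g x + (n : ℝ) * x - a) ∂μ = 0} with hB
  -- monotonicity of `A` (antitone in `s`)
  have hAmono : ∀ ⦃s₁ s₂ : ℝ⦄, s₁ ≤ s₂ → A s₂ ⊆ A s₁ := by
    intro s₁ s₂ h a ha
    refine le_antisymm ?_ zero_le
    calc ∫⁻ x in Set.Ioc (0 : ℝ) s₁, ENNReal.ofReal (g x + (n : ℝ) * x - a) ∂μ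
        ≤ ∫⁻ x in Set.Ioc (0 : ℝ) s₂, ENNReal.ofReal (g x + (n : ℝ) * x - a) ∂μ :=
          lintegral_mono_set (Set.Ioc_subset_Ioc_right h)
      _ = 0 := ha
  have hSmono : Monotone S := fun s₁ s₂ h =>
    sInf_le_sInf (Set.image_mono (hAmono h))
  -- upward closedness of `A s`
  have hup : ∀ (s : ℝ) (a b : ℝ), a ∈ A s → a ≤ b → b ∈ A s := by
    intro s a b ha hab
    refine le_antisymm ?_ zero_le
    calc ∫⁻ x in Set.Ioc (0 : ℝ) s, ENNReal.ofReal (g x + (n : ℝ) * x - b) ∂μ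
        ≤ ∫⁻ x in Set.Ioc (0 : ℝ) s, ENNReal.ofReal (g x + (n : ℝ) * x - a) ∂μ := by
          refine lintegral_mono fun x => ENNReal.ofReal_le_ofReal (by linarith)
      _ = 0 := ha
  have hlim := hSmono.tendsto_nhdsLT t
  set L₀ : EReal := sSup (S '' Set.Iio t) with hL₀
  -- L₀ ≤ sInf (coe '' B)
  have hle1 : L₀ ≤ sInf ((fun a : ℝ => (a : EReal)) '' B) := by
    refine sSup_le ?_
    rintro _ ⟨s, hs, rfl⟩
    refine sInf_le_sInf (Set.image_mono ?_)
    intro a ha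
    refine le_antisymm ?_ zero_le
    calc ∫⁻ x in Set.Ioc (0 : ℝ) s, ENNReal.ofReal (g x + (n : ℝ) * x - a) ∂μ
        ≤ ∫⁻ x in Set.Ioo (0 : ℝ) t, ENNReal.ofReal (g x + (n : ℝ) * x - a) ∂μ :=
          lintegral_mono_set (Set.Ioc_subset_Ioo_right hs)
      _ = 0 := ha
  -- sInf (coe '' B) ≤ L₀
  have hle2 : sInf ((fun a : ℝ => (a : EReal)) '' B) ≤ L₀ := by
    refine le_of_forall_gt_imp_ge_of_dense fun c hc => ?_
    obtain ⟨b, hb1, hb2⟩ := EReal.exists_between_coe_real hc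
    -- show b ∈ A s for every s < t
    have hbA : ∀ s : ℝ, s < t → b ∈ A s := by
      intro s hs
      have h1 : S s ≤ L₀ := le_sSup ⟨s, hs, rfl⟩
      have h2 : sInf ((fun a : ℝ => (a : EReal)) '' A s) < (b : EReal) := lt_of_le_of_lt h1 hb1
      obtain ⟨_, ⟨a, ha, rfl⟩, hab⟩ := sInf_lt_iff.1 h2
      exact hup s a b ha (le_of_lt (EReal.coe_lt_coe_iff.1 hab))
    -- b ∈ B via countable exhaustion
    have hbB : b ∈ B := by
      have hsub : Set.Ioo (0 : ℝ) t ⊆ ⋃ k : ℕ, Set.Ioc (0 : ℝ) (t - 1 / (k + 1)) := by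
        intro x hx
        obtain ⟨k, hk⟩ := exists_nat_one_div_lt (sub_pos.2 hx.2)
        exact Set.mem_iUnion.2 ⟨k, hx.1, by linarith⟩
      refine le_antisymm ?_ zero_le
      calc ∫⁻ x in Set.Ioo (0 : ℝ) t, ENNReal.ofReal (g x + (n : ℝ) * x - b) ∂μ
          ≤ ∫⁻ x in ⋃ k : ℕ, Set.Ioc (0 : ℝ) (t - 1 / (k + 1)),
              ENNReal.ofReal (g x + (n : ℝ) * x - b) ∂μ := lintegral_mono_set hsub
        _ ≤ ∑' k : ℕ, ∫⁻ x in Set.Ioc (0 : ℝ) (t - 1 / (k + 1)),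
              ENNReal.ofReal (g x + (n : ℝ) * x - b) ∂μ := lintegral_iUnion_le _ _
        _ = 0 := by
            rw [ENNReal.tsum_eq_zero]
            intro k
            refine hbA _ ?_
            have hk : (0:ℝ) < 1 / (k+1) := by positivity
            linarith
    calc sInf ((fun a : ℝ => (a : EReal)) '' B) ≤ (b : EReal) := sInf_le ⟨b, hbB, rfl⟩
      _ ≤ c := le_of_lt hb2
  have heq : L₀ = sInf ((fun a : ℝ => (a : EReal)) '' B) := le_antisymm hle1 hle2
  refine ⟨((-((n : ℝ) * t) : ℝ) : EReal) + L₀, ?_, ?_, by rw [heq]⟩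
  · -- convergence
    have h1 : Tendsto (fun s : ℝ => ((-((n : ℝ) * s) : ℝ) : EReal)) (𝓝[<] t)
        (𝓝 ((-((n : ℝ) * t) : ℝ) : EReal)) := by
      have : Continuous fun s : ℝ => ((-((n : ℝ) * s) : ℝ) : EReal) :=
        continuous_coe_real_ereal.comp ((continuous_const.mul continuous_id).neg)
      exact (this.tendsto t).mono_left nhdsWithin_le_nhds
    have hadd : ContinuousAt (fun p : EReal × EReal => p.1 + p.2)
        (((-((n : ℝ) * t) : ℝ) : EReal), L₀) :=
      EReal.continuousAt_add (Or.inl (EReal.coe_ne_top _)) (Or.inl (EReal.coe_ne_bot _))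
    have := hadd.tendsto.comp (h1.prodMk_nhds hlim)
    exact this
  · -- Lt ≤ gnProc t
    have hSle : L₀ ≤ S t := sSup_le (by rintro _ ⟨s, hs, rfl⟩; exact hSmono hs.le)
    exact add_le_add_right hSle _
end

section
/- For every n ∈ ℕ and every t ∈ (0,T] with μ({t}) > 0, one has gⁿ(t) = max(gⁿ(t−), g(t)), where gⁿ(t−) = lim_{s↑t} gⁿ(s) is the left limit (which exists since s ↦ n·s + gⁿ(s) is nondecreasing) and the maximum is taken in ℝ ∪ {−∞}. -/
open MeasureTheory Filter Topology Set

/-- For every `n ∈ ℕ` and `t ∈ (0,T]` with `μ({t}) > 0`, one has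
`gⁿ(t) = max(gⁿ(t−), g(t))`, where `gⁿ(t−) = lim_{s↑t} gⁿ(s)` is the left limit (which
exists) and the maximum is taken in `ℝ ∪ {−∞}`. -/
theorem stmt_4 (T : ℝ) (hT : 0 < T) (μ : Measure ℝ) [IsFiniteMeasure μ]
    (hsupp : μ (Set.Ioc (0 : ℝ) T)ᶜ = 0)
    (g : ℝ → ℝ) (hg : Measurable g)
    (α₀ : ℝ) (hbdd : ∀ᵐ s ∂μ, s ∈ Set.Ioc (0 : ℝ) T → g s ≤ α₀)
    (n : ℕ) (t : ℝ) (ht : t ∈ Set.Ioc (0 : ℝ) T) (hatom : 0 < μ {t}) :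
    ∃ Lt : EReal,
      Tendsto (gnProc μ g n) (𝓝[<] t) (𝓝 Lt) ∧
      gnProc μ g n t = max Lt ((g t : ℝ) : EReal) := by
  obtain ⟨ht0, htT⟩ := ht
  set h : ℝ → ℝ := fun s => g s + (n : ℝ) * s with hh
  have hmeas : Measurable h := hg.add (measurable_const.mul measurable_id)
  set A : ℝ → Set ℝ := fun u =>
    {a : ℝ | ∫⁻ s in Set.Ioc (0 : ℝ) u, ENNReal.ofReal (h s - a) ∂μ = 0} with hA
  set e : ℝ → EReal := fun u => sInf ((fun a : ℝ => (a : EReal)) '' A u) with he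
  have hgn : ∀ u, gnProc μ g n u = ((-((n : ℝ) * u) : ℝ) : EReal) + e u := fun u => rfl
  -- membership characterization
  have hmemA : ∀ u a, a ∈ A u ↔ ∀ᵐ s ∂(μ.restrict (Set.Ioc (0 : ℝ) u)), h s ≤ a := by
    intro u a
    rw [hA]; simp only [Set.mem_setOf_eq]
    rw [lintegral_eq_zero_iff (f := fun s => ENNReal.ofReal (h s - a)) ((hmeas.sub measurable_const).ennreal_ofReal)]
    constructor
    · intro H; filter_upwards [H] with s hs
      simp only [Pi.zero_apply, ENNReal.ofReal_eq_zero, sub_nonpos] at hs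
      exact hs
    · intro H; filter_upwards [H] with s hs
      simp [ENNReal.ofReal_eq_zero, sub_nonpos, hs]
  -- upward closure
  have hup : ∀ u a b, a ∈ A u → a ≤ b → b ∈ A u := by
    intro u a b ha hab
    rw [hmemA] at ha ⊢
    filter_upwards [ha] with s hs; linarith
  -- monotonicity of e
  have hmono : Monotone e := by
    intro u v huv
    apply sInf_le_sInf
    apply Set.image_mono
    intro a ha
    rw [hA, Set.mem_setOf_eq] at ha ⊢
    refine le_antisymm ?_ zero_le
    calc ∫⁻ s in Set.Ioc (0:ℝ) u, ENNReal.ofReal (h s - a) ∂μ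
        ≤ ∫⁻ s in Set.Ioc (0:ℝ) v, ENNReal.ofReal (h s - a) ∂μ :=
          lintegral_mono' (Measure.restrict_mono (Set.Ioc_subset_Ioc_right huv) le_rfl) le_rfl
      _ = 0 := ha
  -- a.e. support
  have haes : ∀ᵐ s ∂μ, s ∈ Set.Ioc (0 : ℝ) T := by
    have h0 : ∀ᵐ s ∂μ, s ∉ (Set.Ioc (0 : ℝ) T)ᶜ :=
      MeasureTheory.measure_eq_zero_iff_ae_notMem.mp hsupp
    filter_upwards [h0] with s hs
    simpa using hs
  -- a uniform upper bound β ∈ A u for all u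
  set β : ℝ := α₀ + (n : ℝ) * T with hβ
  have hβmem : ∀ u, β ∈ A u := by
    intro u
    rw [hmemA]
    apply ae_restrict_of_ae
    filter_upwards [haes, hbdd] with s hs hb
    have h1 : g s ≤ α₀ := hb hs
    have h2 : (n : ℝ) * s ≤ (n : ℝ) * T :=
      mul_le_mul_of_nonneg_left hs.2 (Nat.cast_nonneg n)
    simp only [hh, hβ]; linarith
  have heβ : ∀ u, e u ≤ (β : EReal) := fun u => sInf_le (Set.mem_image_of_mem _ (hβmem u))
  -- atom argument: every a ∈ A t dominates h t
  have hatomle : ∀ a ∈ A t, h t ≤ a := by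
    intro a ha
    by_contra hlt
    push_neg at hlt
    rw [hmemA, MeasureTheory.ae_iff] at ha
    have h1 : μ.restrict (Set.Ioc (0:ℝ) t) {t} = 0 :=
      measure_mono_null (by intro x hx; simp only [Set.mem_singleton_iff] at hx
                            subst hx; simpa using hlt.not_ge) ha
    rw [Measure.restrict_apply (measurableSet_singleton t)] at h1
    rw [Set.inter_eq_self_of_subset_left (Set.singleton_subset_iff.mpr (Set.mem_Ioc.mpr ⟨ht0, le_rfl⟩))] at h1
    exact hatom.ne' h1
  have hhte : ((h t : ℝ) : EReal) ≤ e t := by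
    apply le_sInf
    rintro b ⟨a, ha, rfl⟩
    show ((h t : ℝ) : EReal) ≤ (a : EReal)
    exact_mod_cast hatomle a ha
  -- the left limit
  set L : EReal := sSup (e '' Set.Iio t) with hL
  have hLle : L ≤ e t := sSup_le (by rintro b ⟨s, hs, rfl⟩; exact hmono hs.le)
  have heL : ∀ s, s < t → e s ≤ L := fun s hs => le_sSup (Set.mem_image_of_mem e hs)
  have htend_e : Tendsto e (𝓝[<] t) (𝓝 L) := hmono.tendsto_nhdsLT t
  -- the maximum is a real number c
  set M : EReal := max L ((h t : ℝ) : EReal) with hM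
  have hMtop : M ≠ ⊤ := by
    apply ne_top_of_le_ne_top (EReal.coe_ne_top β)
    exact max_le (hLle.trans (heβ t)) (hhte.trans (heβ t))
  have hMbot : M ≠ ⊥ := by
    rw [hM]
    intro hbot
    have h2 : ((h t : ℝ) : EReal) ≤ ⊥ := hbot ▸ le_max_right L ((h t : ℝ) : EReal)
    exact (EReal.coe_ne_bot (h t)) (le_bot_iff.mp h2)
  set c : ℝ := M.toReal with hc
  have hMc : M = (c : EReal) := (EReal.coe_toReal hMtop hMbot).symm
  have hhtc : h t ≤ c := by
    have h2 : ((h t : ℝ) : EReal) ≤ (c : EReal) := by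
      rw [← hMc, hM]; exact le_max_right _ _
    exact_mod_cast h2
  have hLc : L ≤ (c : EReal) := by
    rw [← hMc, hM]; exact le_max_left _ _
  -- c + ε belongs to A s for every s < t
  have hAlt : ∀ s, s < t → ∀ ε : ℝ, 0 < ε → c + ε ∈ A s := by
    intro s hs ε hε
    have h1 : e s < ((c + ε : ℝ) : EReal) := by
      refine lt_of_le_of_lt ((heL s hs).trans hLc) ?_
      exact_mod_cast (by linarith : c < c + ε)
    rw [he] at h1
    obtain ⟨b, ⟨a, ha, rfl⟩, hba⟩ := sInf_lt_iff.mp h1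
    have hba' : (a : EReal) < ((c + ε : ℝ) : EReal) := hba
    exact hup s a _ ha (by exact_mod_cast hba'.le)
  have hclaim1 : ∀ s, s < t → ∀ᵐ x ∂μ.restrict (Set.Ioc (0:ℝ) s), h x ≤ c := by
    intro s hs
    have hall : ∀ᵐ x ∂μ.restrict (Set.Ioc (0:ℝ) s), ∀ m : ℕ, h x ≤ c + 1/(m+1) := by
      rw [ae_all_iff]
      intro m
      exact (hmemA s _).mp (hAlt s hs (1/(m+1)) (by positivity))
    filter_upwards [hall] with x hx
    by_contra hcx
    push_neg at hcx
    obtain ⟨m, hm⟩ := exists_nat_one_div_lt (show (0:ℝ) < h x - c by linarith)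
    have := hx m
    linarith
  -- measure-zero set where h > c on (0,t)
  have hclaim2 : μ ({x | c < h x} ∩ Set.Ioo (0:ℝ) t) = 0 := by
    have hsub : {x | c < h x} ∩ Set.Ioo (0:ℝ) t ⊆
        ⋃ k : ℕ, ({x | c < h x} ∩ Set.Ioc (0:ℝ) (t - t/(k+1))) := by
      rintro x ⟨hx, hx1, hx2⟩
      obtain ⟨k, hk⟩ := exists_nat_gt (t / (t - x))
      refine Set.mem_iUnion.mpr ⟨k, hx, hx1, ?_⟩
      have h1 : 0 < t - x := by linarith
      have h2 : t / (t - x) < (k : ℝ) + 1 := by linarith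
      have h3 : t / ((k:ℝ)+1) < t - x := by
        rw [div_lt_iff₀ (by positivity)]
        have h4 : t = (t / (t - x)) * (t - x) := by field_simp
        nlinarith
      linarith
    refine measure_mono_null hsub (measure_iUnion_null fun k => ?_)
    have hlt : t - t/((k:ℝ)+1) < t := by
      have : 0 < t / ((k:ℝ)+1) := by positivity
      linarith
    have h1 := hclaim1 _ hlt
    rw [MeasureTheory.ae_iff] at h1
    have hset : {a : ℝ | ¬ h a ≤ c} = {x | c < h x} := by ext x; simp [not_le]
    rw [hset, Measure.restrict_apply (measurableSet_lt measurable_const hmeas)] at h1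
    exact h1
  -- c ∈ A t
  have hcA : c ∈ A t := by
    rw [hmemA, MeasureTheory.ae_iff]
    have hset : {a : ℝ | ¬ h a ≤ c} = {x | c < h x} := by ext x; simp [not_le]
    rw [hset, Measure.restrict_apply (measurableSet_lt measurable_const hmeas)]
    apply measure_mono_null _ hclaim2
    rintro x ⟨hx1, hx2, hx3⟩
    simp only [Set.mem_setOf_eq] at hx1
    have hxt : x < t := by
      rcases lt_or_eq_of_le hx3 with hlt | heq
      · exact hlt
      · exfalso; rw [heq] at hx1; linarith
    exact ⟨hx1, hx2, hxt⟩
  have hetc : e t ≤ (c : EReal) := sInf_le (Set.mem_image_of_mem _ hcA)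
  -- key identity
  have heM : e t = M :=
    le_antisymm (by rw [hMc]; exact hetc) (by rw [hM]; exact max_le hLle hhte)
  -- conclude
  refine ⟨((-((n : ℝ) * t) : ℝ) : EReal) + L, ?_, ?_⟩
  · have h1 : Tendsto (fun s : ℝ => ((-((n : ℝ) * s) : ℝ) : EReal)) (𝓝[<] t)
        (𝓝 ((-((n : ℝ) * t) : ℝ) : EReal)) := by
      apply Tendsto.comp (continuous_coe_real_ereal.tendsto _)
      exact ((continuous_const.mul continuous_id).neg.tendsto t).mono_left nhdsWithin_le_nhds
    have hadd : ContinuousAt (fun p : EReal × EReal => p.1 + p.2)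
        (((-((n : ℝ) * t) : ℝ) : EReal), L) :=
      EReal.continuousAt_add (Or.inl (EReal.coe_ne_top _)) (Or.inl (EReal.coe_ne_bot _))
    have h2 := (hadd.tendsto).comp (h1.prodMk_nhds htend_e)
    exact h2.congr (fun s => (hgn s).symm)
  · rw [hgn t, heM, hM]
    have hkey : ((-((n : ℝ) * t) : ℝ) : EReal) + ((h t : ℝ) : EReal) = ((g t : ℝ) : EReal) := by
      rw [← EReal.coe_add]
      norm_num [hh]
    rcases le_total L ((h t : ℝ) : EReal) with hcmp | hcmp
    · rw [max_eq_right hcmp, hkey]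
      rw [max_eq_right]
      calc ((-((n : ℝ) * t) : ℝ) : EReal) + L
          ≤ ((-((n : ℝ) * t) : ℝ) : EReal) + ((h t : ℝ) : EReal) := add_le_add le_rfl hcmp
        _ = ((g t : ℝ) : EReal) := hkey
    · rw [max_eq_left hcmp]
      rw [max_eq_left]
      calc ((g t : ℝ) : EReal) = ((-((n : ℝ) * t) : ℝ) : EReal) + ((h t : ℝ) : EReal) := hkey.symm
        _ ≤ ((-((n : ℝ) * t) : ℝ) : EReal) + L := add_le_add le_rfl hcmp
end

section
/- For every n ∈ ℕ and every t ∈ (0,T] with μ({t}) = 0, one has gⁿ(t) = gⁿ(t−), where gⁿ(t−) = lim_{s↑t} gⁿ(s) is the left limit (which exists since s ↦ n·s + gⁿ(s) is nondecreasing). -/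
open MeasureTheory Filter Topology Set

/-- For every `n ∈ ℕ` and `t ∈ (0,T]` with `μ({t}) = 0`, one has `gⁿ(t) = gⁿ(t−)`, where
`gⁿ(t−) = lim_{s↑t} gⁿ(s)` is the left limit (which exists). -/
theorem stmt_5 (T : ℝ) (hT : 0 < T) (μ : Measure ℝ) [IsFiniteMeasure μ]
    (hsupp : μ (Set.Ioc (0 : ℝ) T)ᶜ = 0)
    (g : ℝ → ℝ) (hg : Measurable g)
    (α₀ : ℝ) (hbdd : ∀ᵐ s ∂μ, s ∈ Set.Ioc (0 : ℝ) T → g s ≤ α₀)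
    (n : ℕ) (t : ℝ) (ht : t ∈ Set.Ioc (0 : ℝ) T) (hatom : μ {t} = 0) :
    ∃ Lt : EReal,
      Tendsto (gnProc μ g n) (𝓝[<] t) (𝓝 Lt) ∧
      gnProc μ g n t = Lt := by
  classical
  set F : ℝ → EReal := fun u => sInf ((fun a : ℝ => (a : EReal)) ''
      {a : ℝ | ∫⁻ s in Set.Ioc (0 : ℝ) u, ENNReal.ofReal (g s + (n : ℝ) * s - a) ∂μ = 0})
    with hFdef
  -- monotonicity of F
  have hFmono : Monotone F := by
    intro u v huv
    refine sInf_le_sInf (Set.image_mono ?_)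
    intro a ha
    simp only [Set.mem_setOf_eq] at ha ⊢
    refine le_antisymm ?_ (by simp)
    rw [← ha]
    exact lintegral_mono_set (Set.Ioc_subset_Ioc_right huv)
  -- the value α₀ + n*T is always in the set, for u ≤ T
  have hmemA : ∀ u : ℝ, u ≤ T →
      (∫⁻ s in Set.Ioc (0:ℝ) u,
        ENNReal.ofReal (g s + (n:ℝ)*s - (α₀ + (n:ℝ)*T)) ∂μ) = 0 := by
    intro u hu
    have h1 : ∀ᵐ s ∂μ, s ∈ Set.Ioc (0:ℝ) T := by
      refine mem_ae_iff.mpr ?_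
      exact hsupp
    have hae : ∀ᵐ s ∂(μ.restrict (Set.Ioc (0:ℝ) u)),
        ENNReal.ofReal (g s + (n:ℝ)*s - (α₀ + (n:ℝ)*T)) = 0 := by
      filter_upwards [ae_restrict_of_ae (h1.and hbdd)] with s hs
      obtain ⟨hsT, hb⟩ := hs
      have hgs := hb hsT
      have hns : (n:ℝ)*s ≤ (n:ℝ)*T :=
        mul_le_mul_of_nonneg_left hsT.2 (Nat.cast_nonneg n)
      have : g s + (n:ℝ)*s - (α₀ + (n:ℝ)*T) ≤ 0 := by linarith
      simpa [ENNReal.ofReal_eq_zero] using this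
    calc ∫⁻ s in Set.Ioc (0:ℝ) u,
          ENNReal.ofReal (g s + (n:ℝ)*s - (α₀ + (n:ℝ)*T)) ∂μ
        = ∫⁻ _ in Set.Ioc (0:ℝ) u, 0 ∂μ := lintegral_congr_ae hae
      _ = 0 := lintegral_zero
  have hFle : ∀ u : ℝ, u ≤ T → F u ≤ ((α₀ + (n:ℝ)*T : ℝ) : EReal) := by
    intro u hu
    exact sInf_le ⟨α₀ + (n:ℝ)*T, hmemA u hu, rfl⟩
  -- key equality: F t = sSup (F '' Iio t)
  have hkey : sSup (F '' Set.Iio t) = F t := by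
    refine le_antisymm (sSup_le ?_) ?_
    · rintro x ⟨u, hu, rfl⟩
      exact hFmono hu.le
    · by_contra h
      push_neg at h
      -- h : sSup (F '' Iio t) < F t
      obtain ⟨c, hc1, hc2⟩ := EReal.exists_between_coe_real h
      -- c ∈ A u for all u < t
      have hcu : ∀ u : ℝ, u < t →
          (∫⁻ s in Set.Ioc (0:ℝ) u,
            ENNReal.ofReal (g s + (n:ℝ)*s - c) ∂μ) = 0 := by
        intro u hu
        have hFu : F u < (c : EReal) :=
          lt_of_le_of_lt (le_sSup (Set.mem_image_of_mem F (Set.mem_Iio.mpr hu))) hc1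
        rw [hFdef] at hFu
        obtain ⟨x, hx, hxc⟩ := sInf_lt_iff.mp hFu
        obtain ⟨a, ha, rfl⟩ := hx
        have hxc' : (a : EReal) < (c : EReal) := hxc
        have hac : a ≤ c := le_of_lt (by exact_mod_cast hxc')
        simp only [Set.mem_setOf_eq] at ha
        refine le_antisymm ?_ (by simp)
        rw [← ha]
        refine lintegral_mono fun s => ENNReal.ofReal_le_ofReal (by linarith)
      -- hence c ∈ A t
      have hct : (∫⁻ s in Set.Ioc (0:ℝ) t,
          ENNReal.ofReal (g s + (n:ℝ)*s - c) ∂μ) = 0 := by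
        obtain ⟨u, hmono, hult, htend⟩ := exists_seq_strictMono_tendsto t
        have hsub : Set.Ioc (0:ℝ) t ⊆ (⋃ k, Set.Ioc (0:ℝ) (u k)) ∪ {t} := by
          intro x hx
          rcases eq_or_lt_of_le hx.2 with h | h
          · exact Or.inr (by simp [h])
          · obtain ⟨k, hk⟩ := (htend.eventually (eventually_gt_nhds h)).exists
            exact Or.inl (Set.mem_iUnion.mpr ⟨k, hx.1, hk.le⟩)
        refine le_antisymm ?_ (by simp)
        calc (∫⁻ s in Set.Ioc (0:ℝ) t, ENNReal.ofReal (g s + (n:ℝ)*s - c) ∂μ)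
            ≤ ∫⁻ s in (⋃ k, Set.Ioc (0:ℝ) (u k)) ∪ {t},
                ENNReal.ofReal (g s + (n:ℝ)*s - c) ∂μ := lintegral_mono_set hsub
          _ ≤ (∫⁻ s in ⋃ k, Set.Ioc (0:ℝ) (u k),
                ENNReal.ofReal (g s + (n:ℝ)*s - c) ∂μ)
              + ∫⁻ s in ({t} : Set ℝ),
                ENNReal.ofReal (g s + (n:ℝ)*s - c) ∂μ := lintegral_union_le _ _ _
          _ ≤ (∑' k, ∫⁻ s in Set.Ioc (0:ℝ) (u k),
                ENNReal.ofReal (g s + (n:ℝ)*s - c) ∂μ) + 0 := by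
              gcongr
              · exact lintegral_iUnion_le _ _
              · exact le_of_eq (setLIntegral_measure_zero _ _ hatom)
          _ = 0 := by
              simp [fun k => hcu (u k) (hult k)]
      have hmem : ((c : ℝ) : EReal) ∈ (fun a : ℝ => (a : EReal)) ''
          {a : ℝ | ∫⁻ s in Set.Ioc (0 : ℝ) t, ENNReal.ofReal (g s + (n : ℝ) * s - a) ∂μ = 0} :=
        ⟨c, hct, rfl⟩
      exact absurd (sInf_le hmem) (not_le.mpr hc2)
  -- left limit of F
  have hFt : Tendsto F (𝓝[<] t) (𝓝 (F t)) := by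
    have := hFmono.tendsto_nhdsLT t
    rwa [hkey] at this
  -- the linear part
  have hlin : Tendsto (fun u : ℝ => ((-((n:ℝ) * u) : ℝ) : EReal)) (𝓝[<] t)
      (𝓝 ((-((n:ℝ) * t) : ℝ) : EReal)) := by
    refine (continuous_coe_real_ereal.tendsto _).comp ?_
    exact ((continuous_const.mul continuous_id).neg.tendsto t).mono_left nhdsWithin_le_nhds
  refine ⟨gnProc μ g n t, ?_, rfl⟩
  have hadd : ContinuousAt (fun p : EReal × EReal => p.1 + p.2)
      (((-((n:ℝ) * t) : ℝ) : EReal), F t) :=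
    EReal.continuousAt_add (Or.inl (EReal.coe_ne_top _)) (Or.inl (EReal.coe_ne_bot _))
  have : Tendsto (fun u : ℝ => ((-((n:ℝ) * u) : ℝ) : EReal) + F u) (𝓝[<] t)
      (𝓝 (((-((n:ℝ) * t) : ℝ) : EReal) + F t)) :=
    (hadd.tendsto).comp (hlin.prodMk_nhds hFt)
  exact this
end

section
/- For every t ∈ (0,T]: g*₋(t) ≤ g*(t); if μ({t}) > 0 then g*(t) = max(g*₋(t), g(t)); and if μ({t}) = 0 then g*(t) = g*₋(t) (all equalities and inequalities in ℝ ∪ {−∞}). -/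
open MeasureTheory Filter Topology Set

/-- `gStar μ g t = inf_{n ∈ ℕ} gⁿ(t)`. -/
noncomputable def gStar (μ : Measure ℝ) (g : ℝ → ℝ) (t : ℝ) : EReal :=
  ⨅ n : ℕ, gnProc μ g n t

namespace StmtAux

noncomputable def fn (g : ℝ → ℝ) (n : ℕ) (x : ℝ) : EReal := ((g x + (n : ℝ) * x : ℝ) : EReal)

noncomputable def eS (μ : Measure ℝ) (g : ℝ → ℝ) (n : ℕ) (t : ℝ) : EReal :=
  essSup (fn g n) (μ.restrict (Ioc 0 t))

lemma eq_bot_of_forall_le (x : EReal) (h : ∀ a : ℝ, x ≤ (a : EReal)) : x = ⊥ := by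
  induction x using EReal.rec with
  | bot => rfl
  | coe r =>
    have := h (r - 1)
    rw [EReal.coe_le_coe_iff] at this
    linarith
  | top => exact absurd (h 0) (by simp)

lemma sInf_coe_image (e : EReal) :
    sInf ((fun a : ℝ => (a : EReal)) '' {a : ℝ | e ≤ (a : EReal)}) = e := by
  refine le_antisymm ?_ (le_sInf ?_)
  · induction e using EReal.rec with
    | bot =>
      exact le_of_eq (eq_bot_of_forall_le _ fun a => sInf_le ⟨a, show (⊥ : EReal) ≤ (a : EReal) from bot_le, rfl⟩)
    | coe r => exact sInf_le ⟨r, by simp, rfl⟩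
    | top =>
      have : {a : ℝ | (⊤ : EReal) ≤ (a : EReal)} = ∅ := by
        ext a; simp [(EReal.coe_lt_top a).not_ge]
      simp [this]
  · rintro x ⟨a, ha, rfl⟩
    exact ha

lemma zero_set_eq (μ : Measure ℝ) (g : ℝ → ℝ) (hg : Measurable g) (n : ℕ) (t : ℝ) :
    {a : ℝ | ∫⁻ s in Set.Ioc (0 : ℝ) t, ENNReal.ofReal (g s + (n : ℝ) * s - a) ∂μ = 0}
      = {a : ℝ | eS μ g n t ≤ (a : EReal)} := by
  ext a
  have hm : Measurable fun s : ℝ => ENNReal.ofReal (g s + (n : ℝ) * s - a) :=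
    (ENNReal.measurable_ofReal.comp (((hg.add (measurable_id.const_mul _)).sub measurable_const)))
  rw [Set.mem_setOf_eq, Set.mem_setOf_eq, lintegral_eq_zero_iff hm]
  have heq : ((fun s : ℝ => ENNReal.ofReal (g s + (n : ℝ) * s - a)) =ᵐ[μ.restrict (Ioc 0 t)] 0)
      ↔ ∀ᵐ s ∂(μ.restrict (Ioc 0 t)), fn g n s ≤ (a : EReal) := by
    constructor
    · intro h
      filter_upwards [h] with s hs
      simp only [Pi.zero_apply, ENNReal.ofReal_eq_zero, sub_nonpos] at hs
      exact EReal.coe_le_coe_iff.2 hs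
    · intro h
      filter_upwards [h] with s hs
      have : g s + (n : ℝ) * s ≤ a := EReal.coe_le_coe_iff.1 hs
      simp [ENNReal.ofReal_eq_zero, sub_nonpos, this]
  rw [heq]
  constructor
  · intro h
    exact essSup_le_of_ae_le _ h
  · intro h
    filter_upwards [ae_le_essSup (f := fn g n) (μ := μ.restrict (Ioc 0 t))] with s hs
    exact hs.trans h

lemma gnProc_eq (μ : Measure ℝ) (g : ℝ → ℝ) (hg : Measurable g) (n : ℕ) (t : ℝ) :
    gnProc μ g n t = ((-((n : ℝ) * t) : ℝ) : EReal) + eS μ g n t := by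
  rw [gnProc, zero_set_eq μ g hg n t, sInf_coe_image]

lemma eS_mono (μ : Measure ℝ) (g : ℝ → ℝ) (n : ℕ) : Monotone (eS μ g n) := fun s t hst =>
  essSup_mono_measure' (Measure.restrict_mono (Ioc_subset_Ioc_right hst) le_rfl)

lemma essSup_add_measure (f : ℝ → EReal) (μ ν : Measure ℝ) :
    essSup f (μ + ν) = essSup f μ ⊔ essSup f ν := by
  refine le_antisymm ?_ (sup_le ?_ ?_)
  · refine essSup_le_of_ae_le _ ?_
    show ∀ᵐ x ∂(μ + ν), f x ≤ essSup f μ ⊔ essSup f ν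
    rw [ae_add_measure_iff]
    constructor
    · filter_upwards [ae_le_essSup (f := f) (μ := μ)] with s hs
      exact hs.trans le_sup_left
    · filter_upwards [ae_le_essSup (f := f) (μ := ν)] with s hs
      exact hs.trans le_sup_right
  · exact essSup_mono_measure' (Measure.le_add_right le_rfl)
  · exact essSup_mono_measure' (Measure.le_add_left le_rfl)

lemma ae_restrict_singleton (μ : Measure ℝ) (t : ℝ) (h : μ {t} ≠ 0) :
    ae (μ.restrict {t}) = pure t := by
  ext s
  rw [mem_ae_iff, Measure.restrict_apply' (measurableSet_singleton t), mem_pure]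
  constructor
  · intro hs
    by_contra hts
    have hset : sᶜ ∩ {t} = {t} := by
      ext x; simp only [mem_inter_iff, mem_compl_iff, mem_singleton_iff]
      exact ⟨fun h => h.2, fun h => ⟨h ▸ hts, h⟩⟩
    rw [hset] at hs
    exact h hs
  · intro hs
    have hset : sᶜ ∩ {t} = ∅ := by
      ext x; simp only [mem_inter_iff, mem_compl_iff, mem_singleton_iff, mem_empty_iff_false,
        iff_false, not_and]
      rintro hx rfl; exact hx hs
    rw [hset]; exact measure_empty

lemma essSup_restrict_singleton (f : ℝ → EReal) (μ : Measure ℝ) (t : ℝ) (h : μ {t} ≠ 0) :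
    essSup f (μ.restrict {t}) = f t := by
  rw [essSup, ae_restrict_singleton μ t h]
  simp only [limsup_eq, eventually_pure]
  exact csInf_Ici

end StmtAux

namespace StmtAux

lemma coe_add_sup (x : ℝ) (a b : EReal) :
    (x : EReal) + (a ⊔ b) = ((x : EReal) + a) ⊔ ((x : EReal) + b) := by
  rcases le_total a b with h | h
  · rw [sup_eq_right.2 h, sup_eq_right.2 (add_le_add (le_refl _) h)]
  · rw [sup_eq_left.2 h, sup_eq_left.2 (add_le_add (le_refl _) h)]

lemma essSup_Ioo_eq_sSup (μ : Measure ℝ) (g : ℝ → ℝ) (n : ℕ) {t : ℝ} (ht : 0 < t) :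
    essSup (fn g n) (μ.restrict (Ioo 0 t)) = sSup (eS μ g n '' Iio t) := by
  refine le_antisymm ?_ (sSup_le ?_)
  · have hunion : Ioo (0:ℝ) t = ⋃ k : ℕ, Ioc 0 (t - t / (k + 1)) := by
      ext x
      simp only [mem_Ioo, mem_iUnion, mem_Ioc]
      constructor
      · rintro ⟨hx0, hxt⟩
        have h1 : (0:ℝ) < t - x := by linarith
        obtain ⟨k, hk⟩ := exists_nat_gt (t / (t - x))
        refine ⟨k, hx0, ?_⟩
        have hk1 : t / (t - x) < (k : ℝ) + 1 := hk.trans (lt_add_one _)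
        have h2 : t < ((k : ℝ) + 1) * (t - x) := by
          rwa [div_lt_iff₀ h1] at hk1
        have h3 : t / ((k : ℝ) + 1) < t - x := by
          rw [div_lt_iff₀ (by positivity)]
          linarith [h2]
        linarith
      · rintro ⟨k, hx0, hxk⟩
        have hpos : (0:ℝ) < t / ((k : ℝ) + 1) := by positivity
        exact ⟨hx0, by linarith⟩
    rw [hunion]
    refine essSup_le_of_ae_le _ ?_
    show ∀ᵐ x ∂(μ.restrict (⋃ k : ℕ, Ioc 0 (t - t / (k + 1)))),
      fn g n x ≤ sSup (eS μ g n '' Iio t)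
    rw [ae_restrict_iUnion_iff]
    intro k
    have hmem : t - t / ((k : ℝ) + 1) ∈ Iio t := by
      have hpos : (0:ℝ) < t / ((k : ℝ) + 1) := by positivity
      simp only [mem_Iio]; linarith
    filter_upwards [ae_le_essSup (f := fn g n) (μ := μ.restrict (Ioc 0 (t - t / (k + 1))))]
      with s hs
    exact hs.trans (le_sSup (mem_image_of_mem _ hmem))
  · rintro x ⟨s, hs, rfl⟩
    exact essSup_mono_measure'
      (Measure.restrict_mono
        (fun x (hx : x ∈ Ioc (0:ℝ) s) => mem_Ioo.2 ⟨hx.1, lt_of_le_of_lt hx.2 hs⟩) le_rfl)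

end StmtAux



open StmtAux

/-- For every `t ∈ (0,T]`: the left limits `gⁿ(t−)` exist, `g*₋(t) ≤ g*(t)`; if `μ({t}) > 0`
then `g*(t) = max(g*₋(t), g(t))`; and if `μ({t}) = 0` then `g*(t) = g*₋(t)`, where
`g*(t) = inf_n gⁿ(t)` and `g*₋(t) = inf_n gⁿ(t−)`, all in `ℝ ∪ {−∞}`. -/
theorem stmt_8 (T : ℝ) (hT : 0 < T) (μ : Measure ℝ) [IsFiniteMeasure μ]
    (hsupp : μ (Set.Ioc (0 : ℝ) T)ᶜ = 0)
    (g : ℝ → ℝ) (hg : Measurable g)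
    (α₀ : ℝ) (hbdd : ∀ᵐ s ∂μ, s ∈ Set.Ioc (0 : ℝ) T → g s ≤ α₀)
    (t : ℝ) (ht : t ∈ Set.Ioc (0 : ℝ) T) :
    ∃ L : ℕ → EReal,
      (∀ n : ℕ, Tendsto (gnProc μ g n) (𝓝[<] t) (𝓝 (L n))) ∧
      (⨅ n : ℕ, L n) ≤ gStar μ g t ∧
      (0 < μ {t} → gStar μ g t = max (⨅ n : ℕ, L n) ((g t : ℝ) : EReal)) ∧
      (μ {t} = 0 → gStar μ g t = ⨅ n : ℕ, L n) := by
  have ht0 : 0 < t := ht.1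
  set E : ℕ → EReal := fun n => essSup (fn g n) (μ.restrict (Ioo 0 t)) with hE
  set L : ℕ → EReal := fun n => ((-((n : ℝ) * t) : ℝ) : EReal) + E n with hL
  have hEM : ∀ n, E n = sSup (eS μ g n '' Iio t) := fun n => essSup_Ioo_eq_sSup μ g n ht0
  have hE_le : ∀ n, E n ≤ eS μ g n t := fun n =>
    essSup_mono_measure' (Measure.restrict_mono Ioo_subset_Ioc_self le_rfl)
  refine ⟨L, ?_, ?_, ?_, ?_⟩
  · -- tendsto
    intro n
    have hfe : gnProc μ g n = fun s => ((-((n : ℝ) * s) : ℝ) : EReal) + eS μ g n s :=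
      funext fun s => gnProc_eq μ g hg n s
    rw [hfe]
    have ta : Tendsto (fun s : ℝ => ((-((n : ℝ) * s) : ℝ) : EReal)) (𝓝[<] t)
        (𝓝 ((-((n : ℝ) * t) : ℝ) : EReal)) := by
      refine Tendsto.mono_left ?_ nhdsWithin_le_nhds
      exact (continuous_coe_real_ereal.comp ((continuous_const.mul continuous_id).neg)).tendsto t
    have tb : Tendsto (eS μ g n) (𝓝[<] t) (𝓝 (E n)) := by
      rw [hEM n]
      exact (eS_mono μ g n).tendsto_nhdsLT t
    have hc : ContinuousAt (fun p : EReal × EReal => p.1 + p.2)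
        (((-((n : ℝ) * t) : ℝ) : EReal), E n) :=
      EReal.continuousAt_add (Or.inl (EReal.coe_ne_top _)) (Or.inl (EReal.coe_ne_bot _))
    exact hc.tendsto.comp (ta.prodMk_nhds tb)
  · -- inf L ≤ gStar
    refine iInf_mono fun n => ?_
    rw [gnProc_eq μ g hg n t]
    exact add_le_add (le_refl _) (hE_le n)
  · -- atom case
    intro hpos
    have hne : μ {t} ≠ 0 := hpos.ne'
    have hIoc : Ioc (0:ℝ) t = Ioo 0 t ∪ {t} := (Set.Ioo_union_right ht0).symm
    have hrestr : μ.restrict (Ioc 0 t) = μ.restrict (Ioo 0 t) + μ.restrict {t} := by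
      rw [hIoc, Measure.restrict_union _ (measurableSet_singleton t)]
      exact Set.disjoint_singleton_right.2 fun h => lt_irrefl t h.2
    have heS : ∀ n, eS μ g n t = E n ⊔ fn g n t := by
      intro n
      rw [eS, hrestr, essSup_add_measure, essSup_restrict_singleton _ _ _ hne]
    have hg2 : ∀ n : ℕ, gnProc μ g n t = L n ⊔ ((g t : ℝ) : EReal) := by
      intro n
      rw [gnProc_eq μ g hg n t, heS n, coe_add_sup]
      congr 1
      rw [fn, ← EReal.coe_add]
      norm_num
    rw [gStar]
    simp_rw [hg2]
    rw [← iInf_sup_eq]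
  · -- no atom case
    intro hzero
    have hae : Ioc (0:ℝ) t =ᵐ[μ] Ioo (0:ℝ) t := by
      rw [ae_eq_set]
      constructor
      · refine measure_mono_null (fun x hx => ?_) hzero
        rcases hx with ⟨hx1, hx2⟩
        have : x = t := le_antisymm hx1.2 (not_lt.1 fun h => hx2 ⟨hx1.1, h⟩)
        exact this ▸ rfl
      · refine measure_mono_null (fun x hx => ?_) hzero
        exact absurd ⟨hx.1.1, hx.1.2.le⟩ hx.2
    have heS : ∀ n, eS μ g n t = E n := by
      intro n
      rw [eS, Measure.restrict_congr_set hae]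
    rw [gStar]
    congr 1
    funext n
    rw [gnProc_eq μ g hg n t, heS n]
end

section
/- The set {t ∈ (0,T] : g*₋(t) < g*(t)} is contained in the set of atoms {t ∈ (0,T] : μ({t}) > 0} of μ, and is therefore countable. -/
open MeasureTheory Filter Topology Set

/-- The zero-integral set is upward closed. -/
lemma zeroSet_upward (μ : Measure ℝ) (g : ℝ → ℝ) (n : ℕ) (s : ℝ) {a b : ℝ}
    (hab : a ≤ b)
    (ha : ∫⁻ u in Set.Ioc (0 : ℝ) s, ENNReal.ofReal (g u + (n : ℝ) * u - a) ∂μ = 0) :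
    ∫⁻ u in Set.Ioc (0 : ℝ) s, ENNReal.ofReal (g u + (n : ℝ) * u - b) ∂μ = 0 := by
  refine le_antisymm ?_ (zero_le)
  rw [← ha]
  refine lintegral_mono fun u => ENNReal.ofReal_le_ofReal ?_
  linarith

/-- Per-`n` key step: if `μ {t} = 0` then the left limit dominates the value. -/
lemma gnProc_le_leftLim (μ : Measure ℝ) [IsFiniteMeasure μ] (g : ℝ → ℝ) (hg : Measurable g)
    (n : ℕ) (t : ℝ) (ht : 0 < t) (hat : μ {t} = 0) (Lnt : EReal)
    (hL : Tendsto (gnProc μ g n) (𝓝[<] t) (𝓝 Lnt)) :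
    gnProc μ g n t ≤ Lnt := by
  by_contra hcon
  push_neg at hcon
  obtain ⟨b, hb1, hb2⟩ := EReal.exists_between_coe_real hcon
  -- eventually `gnProc μ g n s < b` for `s` in a left neighborhood of `t`
  have hev : ∀ᶠ s in 𝓝[<] t, gnProc μ g n s < (b : EReal) :=
    hL.eventually (Filter.Tendsto.eventually_lt_const hb1 tendsto_id) |>.mono (fun s hs => hs)
  obtain ⟨l, hl, hIoo⟩ := mem_nhdsLT_iff_exists_Ioo_subset.mp hev
  simp only [Set.mem_Iio] at hl
  set β : ℝ := (n : ℝ) * t + b with hβ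
  -- `β` belongs to the zero set at every `s ∈ Ioo l t`
  have hβmem : ∀ s ∈ Set.Ioo l t,
      ∫⁻ u in Set.Ioc (0 : ℝ) s, ENNReal.ofReal (g u + (n : ℝ) * u - β) ∂μ = 0 := by
    intro s hs
    have hlt : gnProc μ g n s < (b : EReal) := hIoo hs
    have hkey : sInf ((fun a : ℝ => (a : EReal)) ''
        {a : ℝ | ∫⁻ u in Set.Ioc (0 : ℝ) s, ENNReal.ofReal (g u + (n : ℝ) * u - a) ∂μ = 0})
        = (((n : ℝ) * s : ℝ) : EReal) + gnProc μ g n s := by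
      rw [gnProc, ← add_assoc, ← EReal.coe_add]
      norm_num
    have hlt2 : sInf ((fun a : ℝ => (a : EReal)) ''
        {a : ℝ | ∫⁻ u in Set.Ioc (0 : ℝ) s, ENNReal.ofReal (g u + (n : ℝ) * u - a) ∂μ = 0})
        < ((((n : ℝ) * s + b : ℝ)) : EReal) := by
      rw [hkey, EReal.coe_add]
      exact EReal.add_lt_add_left_coe hlt _
    have hle : ((((n : ℝ) * s + b : ℝ)) : EReal) ≤ (β : EReal) := by
      rw [EReal.coe_le_coe_iff, hβ]
      have : (n : ℝ) * s ≤ (n : ℝ) * t :=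
        mul_le_mul_of_nonneg_left hs.2.le (Nat.cast_nonneg n)
      linarith
    obtain ⟨x, hx, hxlt⟩ := sInf_lt_iff.mp (lt_of_lt_of_le hlt2 hle)
    obtain ⟨a, ha, rfl⟩ := hx
    exact zeroSet_upward μ g n s (EReal.coe_le_coe_iff.mp hxlt.le) ha
  -- pass to the limit using a sequence increasing to `t`
  set f : ℝ → ENNReal := fun u => ENNReal.ofReal (g u + (n : ℝ) * u - β) with hf
  have hfm : Measurable f := by
    apply ENNReal.measurable_ofReal.comp
    exact ((hg.add (measurable_const.mul measurable_id)).sub measurable_const)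
  set ν : Measure ℝ := μ.withDensity f with hν
  set c : ℝ := (l + t) / 2 with hc
  have hct : c < t := by rw [hc]; linarith
  have hlc : l < c := by rw [hc]; linarith
  set S : ℕ → ℝ := fun k => t - (t - c) / (k + 1) with hS
  have hSmem : ∀ k, S k ∈ Set.Ioo l t := by
    intro k
    have h1 : (0 : ℝ) < (k : ℝ) + 1 := by positivity
    have h2 : (t - c) / ((k : ℝ) + 1) ≤ t - c := by
      rw [div_le_iff₀ h1]
      nlinarith
    have h3 : 0 < (t - c) / ((k : ℝ) + 1) := div_pos (by linarith) h1
    constructor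
    · simp only [hS]; linarith
    · simp only [hS]; linarith
  have hcover : Set.Ioo (0 : ℝ) t ⊆ ⋃ k, Set.Ioc (0 : ℝ) (S k) := by
    intro x hx
    have hxt : 0 < t - x := by linarith [hx.2]
    obtain ⟨k, hk⟩ := exists_nat_gt ((t - c) / (t - x))
    have hk1 : (t - c) / (t - x) < (k : ℝ) + 1 := by linarith
    have h1 : (0 : ℝ) < (k : ℝ) + 1 := by positivity
    have h2 : (t - c) / ((k : ℝ) + 1) < t - x := by
      rw [div_lt_iff₀ h1]
      rw [div_lt_iff₀ hxt] at hk1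
      nlinarith
    refine Set.mem_iUnion.mpr ⟨k, hx.1, ?_⟩
    simp only [hS]; linarith
  have hν0 : ∀ k, ν (Set.Ioc (0 : ℝ) (S k)) = 0 := by
    intro k
    rw [hν, withDensity_apply f measurableSet_Ioc]
    exact hβmem (S k) (hSmem k)
  have hνIoo : ν (Set.Ioo (0 : ℝ) t) = 0 := by
    refine le_antisymm ?_ (zero_le)
    calc ν (Set.Ioo (0 : ℝ) t) ≤ ν (⋃ k, Set.Ioc (0 : ℝ) (S k)) := measure_mono hcover
      _ ≤ ∑' k, ν (Set.Ioc (0 : ℝ) (S k)) := measure_iUnion_le _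
      _ = 0 := by simp [hν0]
  have hνt : ν {t} = 0 := by
    rw [hν, withDensity_apply f (measurableSet_singleton t)]
    exact setLIntegral_measure_zero _ _ hat
  have hνIoc : ν (Set.Ioc (0 : ℝ) t) = 0 := by
    refine le_antisymm ?_ (zero_le)
    calc ν (Set.Ioc (0 : ℝ) t) ≤ ν (Set.Ioo (0 : ℝ) t ∪ {t}) := by
          refine measure_mono fun x hx => ?_
          rcases eq_or_lt_of_le hx.2 with h | h
          · exact Or.inr (by simp [h])
          · exact Or.inl ⟨hx.1, h⟩
      _ ≤ ν (Set.Ioo (0 : ℝ) t) + ν {t} := measure_union_le _ _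
      _ = 0 := by rw [hνIoo, hνt, add_zero]
  have hβt : ∫⁻ u in Set.Ioc (0 : ℝ) t, ENNReal.ofReal (g u + (n : ℝ) * u - β) ∂μ = 0 := by
    rw [← withDensity_apply f measurableSet_Ioc]
    exact hνIoc
  -- conclude `gnProc μ g n t ≤ b`, contradiction
  have hfinal : gnProc μ g n t ≤ (b : EReal) := by
    have hmem : (β : EReal) ∈ (fun a : ℝ => (a : EReal)) ''
        {a : ℝ | ∫⁻ u in Set.Ioc (0 : ℝ) t, ENNReal.ofReal (g u + (n : ℝ) * u - a) ∂μ = 0} :=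
      ⟨β, hβt, rfl⟩
    have h1 : gnProc μ g n t ≤ ((-((n : ℝ) * t) : ℝ) : EReal) + (β : EReal) :=
      add_le_add_right (sInf_le hmem) _
    refine h1.trans_eq ?_
    rw [← EReal.coe_add, hβ]
    norm_num
  exact absurd hb2 (not_lt.mpr hfinal)

/-- The set `{t ∈ (0,T] : g*₋(t) < g*(t)}` is contained in the set of atoms of `μ`, and is
therefore countable. Here `L n t` denotes the left limit `gⁿ(t−)` and
`g*₋(t) = inf_n L n t`, `g*(t) = inf_n gⁿ(t)`. -/
theorem stmt_9 (T : ℝ) (hT : 0 < T) (μ : Measure ℝ) [IsFiniteMeasure μ]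
    (hsupp : μ (Set.Ioc (0 : ℝ) T)ᶜ = 0)
    (g : ℝ → ℝ) (hg : Measurable g)
    (α₀ : ℝ) (hbdd : ∀ᵐ s ∂μ, s ∈ Set.Ioc (0 : ℝ) T → g s ≤ α₀)
    (L : ℕ → ℝ → EReal)
    (hL : ∀ n : ℕ, ∀ t ∈ Set.Ioc (0 : ℝ) T, Tendsto (gnProc μ g n) (𝓝[<] t) (𝓝 (L n t))) :
    {t ∈ Set.Ioc (0 : ℝ) T | (⨅ n : ℕ, L n t) < gStar μ g t} ⊆ {t : ℝ | 0 < μ {t}} ∧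
    {t ∈ Set.Ioc (0 : ℝ) T | (⨅ n : ℕ, L n t) < gStar μ g t}.Countable := by
  have hsub : {t ∈ Set.Ioc (0 : ℝ) T | (⨅ n : ℕ, L n t) < gStar μ g t} ⊆ {t : ℝ | 0 < μ {t}} := by
    intro t ht
    obtain ⟨htIoc, hlt⟩ := ht
    by_contra h0
    have hat : μ {t} = 0 := by
      simpa [not_lt, le_zero_iff] using h0
    have hge : gStar μ g t ≤ ⨅ n : ℕ, L n t := by
      refine le_iInf fun n => ?_
      refine (iInf_le _ n).trans ?_
      exact gnProc_le_leftLim μ g hg n t htIoc.1 hat (L n t) (hL n t htIoc)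
    exact absurd hlt (not_lt.mpr hge)
  refine ⟨hsub, Set.Countable.mono hsub ?_⟩
  have := Measure.countable_meas_level_set_pos (μ := μ) (g := fun x : ℝ => x) measurable_id
  simpa [Set.setOf_eq_eq_singleton] using this
end
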